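/- Let m_p(r, a) denote the multiplicity of the cyclic quotient surface singularity ℂ²/ℤ_r(a, 1) (equivalently, minus the self-intersection of the fundamental cycle of its minimal resolution). For gcd(r,a) = 1 with 0 < a < r, and r₁ = min(r - a, a), a₁ = r mod r₁: m_p(r, a) + m_p(r, r - a) = ⌊r/r₁⌋ + m_p(r₁, a₁) + m_p(r₁, r₁ - a₁). -/

import Mathlib

/-- Hirzebruch–Jung continued fraction expansion of `r / a`:
`r / a = b₁ - 1/(b₂ - 1/(⋯))` with `bⱼ = ⌈·⌉` at each stage.  `hj r a` is the list
`[b₁, b₂, …]`; for `a = 0` it is the empty list. -/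
def hj : ℕ → ℕ → List ℕ
  | _, 0 => []
  | r, (a + 1) => ((r + a) / (a + 1)) :: hj (a + 1) ((r + a) / (a + 1) * (a + 1) - r)
termination_by r a => a
decreasing_by
  have h : (r + a) / (a + 1) * (a + 1) ≤ r + a := Nat.div_mul_le_self _ _
  omega

/-- The multiplicity of the cyclic quotient surface singularity `ℂ²/ℤ_r(a,1)`
(minus the self-intersection of the fundamental cycle of the minimal resolution):
for `r > 1` it equals `Σ bⱼ - 2(n - 1)` where `r/a = [b₁,…,b_n]` is the
Hirzebruch–Jung continued fraction; for a smooth point (`r ≤ 1`) it is `1`. -/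
def multp (r a : ℕ) : ℤ :=
  if r ≤ 1 then 1 else ((hj r a).sum : ℤ) - 2 * (((hj r a).length : ℤ) - 1)

lemma hj_succ (r b : ℕ) :
    hj r (b+1) = ((r + b) / (b + 1)) :: hj (b+1) ((r + b) / (b + 1) * (b + 1) - r) := by
  rw [hj]

lemma multp_of_gt (r a : ℕ) (hr : 1 < r) :
    multp r a = ((hj r a).sum : ℤ) - 2 * (((hj r a).length : ℤ) - 1) := by
  simp [multp]; omega

/-- one HJ step when `a ∤ r`. -/
lemma hj_step (r a : ℕ) (ha : 0 < a) (har : a < r) (hnd : r % a ≠ 0) :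
    hj r a = (r / a + 1) :: hj a (a - r % a) := by
  obtain ⟨b, rfl⟩ : ∃ b, a = b + 1 := ⟨a - 1, by omega⟩
  have h1 : r / (b+1) * (b+1) + r % (b+1) = r := Nat.div_add_mod' r (b+1)
  have h2 : r % (b+1) < b+1 := Nat.mod_lt _ (by omega)
  have head : (r + b) / (b + 1) = r / (b+1) + 1 := by
    apply Nat.div_eq_of_lt_le
    · rw [add_mul, one_mul]; omega
    · rw [add_mul, add_mul, one_mul]; omega
  have tail : (r / (b+1) + 1) * (b + 1) - r = (b+1) - r % (b+1) := by
    rw [add_mul, one_mul]; omega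
  rw [hj_succ, head, tail]

/-- key comparison: adding `b` to `r` just bumps the head of the HJ expansion. -/
lemma lemB (a b : ℕ) (hb : 0 < b) (ha : 1 < a) : multp (a + b) b = 1 + multp a b := by
  obtain ⟨c, rfl⟩ : ∃ c, b = c + 1 := ⟨b - 1, by omega⟩
  have h1 : (a + c) / (c+1) * (c+1) + (a + c) % (c+1) = a + c :=
    Nat.div_add_mod' (a + c) (c+1)
  have h2 : (a + c) % (c+1) < c+1 := Nat.mod_lt _ (by omega)
  have head : (a + (c+1) + c) / (c+1) = (a + c) / (c+1) + 1 := by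
    apply Nat.div_eq_of_lt_le
    · rw [add_mul, one_mul]; omega
    · rw [add_mul, add_mul, one_mul]; omega
  have tail : ((a + c) / (c+1) + 1) * (c+1) - (a + (c+1))
      = (a + c) / (c+1) * (c+1) - a := by
    rw [add_mul, one_mul]; omega
  rw [multp_of_gt _ _ (by omega), multp_of_gt _ _ (by omega), hj_succ (a + (c+1)),
    hj_succ a, head, tail, List.sum_cons, List.sum_cons, List.length_cons, List.length_cons]
  push_cast
  ring

lemma multp_two_one : multp 2 1 = 2 := by
  have h : hj 2 1 = [2] := by rw [hj_succ]; norm_num [hj]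
  rw [multp_of_gt _ _ (by omega), h]
  simp

/-- `multp r (r-a) = 1 + multp a (r % a)` for coprime `0 < a < r`. -/
lemma lemA : ∀ r : ℕ, ∀ a : ℕ, 0 < a → a < r → Nat.Coprime r a →
    multp r (r - a) = 1 + multp a (r % a) := by
  intro r
  induction r using Nat.strong_induction_on with
  | _ r IH =>
  intro a ha har hcop
  rcases lt_trichotomy r (2 * a) with h | h | h
  · -- r < 2a : base case via lemB
    have ha1 : 1 < a := by
      by_contra h'
      have : a = 1 := by omega
      omega
    have hmod : r % a = r - a := by
      rw [Nat.mod_eq_sub_mod (by omega), Nat.mod_eq_of_lt (by omega)]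
    have hB := lemB a (r - a) (by omega) ha1
    rw [show a + (r - a) = r by omega] at hB
    rw [hmod]
    exact hB
  · -- r = 2a : coprimality forces a = 1, r = 2
    have hdvd : a ∣ r := ⟨2, by omega⟩
    have h1 : a ∣ Nat.gcd r a := Nat.dvd_gcd hdvd dvd_rfl
    rw [hcop, Nat.dvd_one] at h1
    subst h1
    have : r = 2 := by omega
    subst this
    rw [multp_two_one]
    norm_num [multp]
  · -- r > 2a : strip a `2` from the front
    have hq : r / (r - a) = 1 := by
      apply Nat.div_eq_of_lt_le <;> omega
    have hm : r % (r - a) = a := by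
      have := Nat.div_add_mod' r (r - a)
      rw [hq] at this; omega
    have step : hj r (r - a) = 2 :: hj (r - a) ((r - a) - a) := by
      rw [hj_step r (r - a) (by omega) (by omega) (by omega), hq, hm]
    have hmod : (r - a) % a = r % a := by
      conv_rhs => rw [show r = (r - a) + a by omega]
      rw [Nat.add_mod_right]
    have hcop2 : Nat.Coprime (r - a) a := (Nat.coprime_sub_self_left (by omega)).mpr hcop
    have IH' := IH (r - a) (by omega) a ha (by omega) hcop2
    rw [multp_of_gt _ _ (by omega), step, List.sum_cons, List.length_cons]
    rw [multp_of_gt _ _ (by omega)] at IH'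
    rw [← hmod]
    push_cast
    push_cast at IH'
    omega

/-- one-step recursion for `multp r a` itself. -/
lemma lemC (r a : ℕ) (ha : 1 < a) (har : a < r) (hnd : r % a ≠ 0) :
    multp r a = (r / a : ℤ) - 1 + multp a (a - r % a) := by
  rw [multp_of_gt _ _ (by omega), multp_of_gt _ _ (by omega),
    hj_step r a (by omega) har hnd, List.sum_cons, List.length_cons]
  push_cast
  ring

lemma coprime_mod_ne_zero (r a : ℕ) (ha : 1 < a) (har : a < r) (hcop : Nat.Coprime r a) :
    r % a ≠ 0 := by
  intro h
  have hdvd : a ∣ r := Nat.dvd_of_mod_eq_zero h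
  have h1 : a ∣ Nat.gcd r a := Nat.dvd_gcd hdvd dvd_rfl
  rw [hcop, Nat.dvd_one] at h1
  omega

lemma main_half (r a : ℕ) (hcop : Nat.Coprime r a) (ha : 1 < a) (h2a : 2 * a < r) :
    multp r a + multp r (r - a)
      = (r / a : ℕ) + multp a (r % a) + multp a (a - r % a) := by
  have hnd := coprime_mod_ne_zero r a ha (by omega) hcop
  rw [lemC r a ha (by omega) hnd, lemA r a (by omega) (by omega) hcop]
  push_cast
  ring

lemma multp_r_one (r : ℕ) (hr : 1 < r) : multp r 1 = r := by
  have h : hj r 1 = [r] := by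
    rw [hj_succ]
    norm_num [hj]
  rw [multp_of_gt _ _ hr, h]
  simp

lemma deg_case (r : ℕ) (hr : 2 < r) :
    multp r 1 + multp r (r - 1)
      = (r / 1 : ℕ) + multp 1 (r % 1) + multp 1 (1 - r % 1) := by
  have e2 : multp r (r - 1) = 1 + multp 1 (r % 1) :=
    lemA r 1 (by omega) (by omega) (Nat.coprime_one_right r)
  rw [multp_r_one r (by omega), e2]
  norm_num [multp]
  omega

/-- `m_p(r, a) + m_p(r, r - a) = ⌊r/r₁⌋ + m_p(r₁, a₁) + m_p(r₁, r₁ - a₁)` where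
`r₁ = min (r - a) a` and `a₁ = r mod r₁`. -/
theorem stmt_7 (r a : ℕ) (hcop : Nat.Coprime r a) (ha : 0 < a) (har : a < r) :
    multp r a + multp r (r - a)
      = (r / min (r - a) a : ℕ) +
          multp (min (r - a) a) (r % min (r - a) a) +
          multp (min (r - a) a) (min (r - a) a - r % min (r - a) a) := by
  have hcop2 : Nat.Coprime (r - a) a := (Nat.coprime_sub_self_left (by omega)).mpr hcop
  have hcop' : Nat.Coprime r (r - a) := by
    have h1 : Nat.Coprime (r - a) (a + (r - a)) := Nat.coprime_add_self_right.mpr hcop2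
    rw [show a + (r - a) = r by omega] at h1
    exact h1.symm
  rcases lt_trichotomy (2 * a) r with h | h | h
  · -- a < r - a, min = a
    rcases eq_or_lt_of_le (show 1 ≤ a from ha) with h1 | h1
    · -- a = 1
      have ha1 : a = 1 := h1.symm
      subst ha1
      rw [show min (r - 1) 1 = 1 by omega]
      exact deg_case r (by omega)
    · rw [show min (r - a) a = a by omega]
      exact main_half r a hcop h1 h
  · -- r = 2a : a = 1, r = 2
    have hdvd : a ∣ r := ⟨2, by omega⟩
    have h1 : a ∣ Nat.gcd r a := Nat.dvd_gcd hdvd dvd_rfl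
    rw [hcop, Nat.dvd_one] at h1
    subst h1
    have : r = 2 := by omega
    subst this
    rw [show min (2 - 1) 1 = 1 by omega]
    rw [show (2 : ℕ) - 1 = 1 by omega, multp_two_one]
    norm_num [multp]
  · -- r - a < a, min = r - a
    rcases eq_or_lt_of_le (show 1 ≤ r - a by omega) with h1 | h1
    · -- r - a = 1
      rw [show min (r - a) a = 1 by omega]
      have := deg_case r (by omega)
      rw [show r - a = 1 by omega]
      rw [show a = r - 1 by omega]
      linarith [this]
    · rw [show min (r - a) a = r - a by omega]
      have := main_half r (r - a) hcop' h1 (by omega)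
      rwa [show r - (r - a) = a by omega, add_comm (multp r (r - a))] at this
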